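/- Let G(t,r) = a^{1/(1-α)} ∫_t^T e^{m₁(t,u) + m₂(t,u) r + σ²(t,u)/2} du + b^{1/(1-α)} e^{m₁(t,T) + m₂(t,T) r + σ²(t,T)/2}, where m₂(t,u) = (α/(1-α)) n(u-t) with n(x) = (1-e^{-κx})/κ and κ > 0, α ∈ (0,1), a,b ≥ 0 (not both zero), and m₁, σ² are continuous. Then for all t ∈ [0,T) and r ∈ ℝ, the logarithmic derivative satisfies |∂_r G(t,r)/G(t,r)| ≤ (α/(1-α)) n(T) ≤ α/((1-α)κ); in particular D_r G/G is globally bounded. -/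

import Mathlib

open Real MeasureTheory intervalIntegral Set Metric

/-- in the Vasicek model the logarithmic derivative `∂_r G / G`
of the value-function factor `G` is globally bounded by
`(α/(1-α)) n(T) ≤ α/((1-α)κ)`. -/
theorem stmt18 (T κ α a b : ℝ) (hT : 0 < T) (hκ : 0 < κ)
    (hα : α ∈ Set.Ioo (0:ℝ) 1) (ha : 0 ≤ a) (hb : 0 ≤ b) (hab : ¬(a = 0 ∧ b = 0))
    (m₁ σ2 : ℝ → ℝ → ℝ)
    (hm₁ : Continuous fun p : ℝ × ℝ => m₁ p.1 p.2)
    (hσ2 : Continuous fun p : ℝ × ℝ => σ2 p.1 p.2)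
    (n : ℝ → ℝ) (hn : ∀ x, n x = (1 - Real.exp (-κ * x)) / κ)
    (m₂ : ℝ → ℝ → ℝ) (hm₂ : ∀ t u, m₂ t u = α / (1 - α) * n (u - t))
    (G : ℝ → ℝ → ℝ)
    (hG : ∀ t r, G t r
      = a ^ (1 / (1 - α)) * (∫ u in t..T, Real.exp (m₁ t u + m₂ t u * r + σ2 t u / 2))
        + b ^ (1 / (1 - α)) * Real.exp (m₁ t T + m₂ t T * r + σ2 t T / 2)) :
    ∀ t ∈ Set.Ico (0:ℝ) T, ∀ r : ℝ,
      |deriv (fun r => G t r) r / G t r| ≤ α / (1 - α) * n T ∧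
        α / (1 - α) * n T ≤ α / ((1 - α) * κ) := by
  obtain ⟨hα0, hα1⟩ := hα
  have h1α : (0:ℝ) < 1 - α := by linarith
  set c : ℝ := α / (1 - α) with hcdef
  have hc0 : 0 < c := div_pos hα0 h1α
  -- basic facts about n
  have hn_cont : Continuous n := by
    have : n = fun x => (1 - Real.exp (-κ * x)) / κ := funext hn
    rw [this]; continuity
  have hn_nonneg : ∀ x, 0 ≤ x → 0 ≤ n x := by
    intro x hx
    rw [hn]
    apply div_nonneg _ hκ.le
    have : Real.exp (-κ * x) ≤ 1 := Real.exp_le_one_iff.mpr (by nlinarith)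
    linarith
  have hn_mono : ∀ x y : ℝ, x ≤ y → n x ≤ n y := by
    intro x y hxy
    rw [hn, hn]
    apply div_le_div_of_nonneg_right _ hκ.le
    have : Real.exp (-κ * y) ≤ Real.exp (-κ * x) := Real.exp_le_exp.mpr (by nlinarith)
    linarith
  have hM0 : 0 ≤ c * n T := mul_nonneg hc0.le (hn_nonneg T hT.le)
  -- the second inequality
  have hsecond : c * n T ≤ α / ((1 - α) * κ) := by
    have hnT : n T ≤ 1 / κ := by
      rw [hn]
      apply div_le_div_of_nonneg_right _ hκ.le
      have := Real.exp_pos (-κ * T); linarith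
    calc c * n T ≤ c * (1 / κ) := mul_le_mul_of_nonneg_left hnT hc0.le
      _ = α / ((1 - α) * κ) := by rw [hcdef, div_mul_div_comm, mul_one]
  intro t ht r
  obtain ⟨ht0, htT⟩ := ht
  refine ⟨?_, hsecond⟩
  set M : ℝ := c * n T with hMdef
  -- m₂ bounds on [t,T]
  have hm₂_bound : ∀ u ∈ Set.Icc t T, 0 ≤ m₂ t u ∧ m₂ t u ≤ M := by
    intro u hu
    obtain ⟨hu1, hu2⟩ := hu
    rw [hm₂]
    constructor
    · exact mul_nonneg hc0.le (hn_nonneg _ (by linarith))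
    · exact mul_le_mul_of_nonneg_left (hn_mono _ _ (by linarith)) hc0.le
  -- the integrand
  set f : ℝ → ℝ → ℝ := fun u x => Real.exp (m₁ t u + m₂ t u * x + σ2 t u / 2) with hfdef
  have hm₁c : Continuous fun u => m₁ t u := hm₁.comp (continuous_const.prodMk continuous_id)
  have hσ2c : Continuous fun u => σ2 t u := hσ2.comp (continuous_const.prodMk continuous_id)
  have hm₂c : Continuous fun u => m₂ t u := by
    have : (fun u => m₂ t u) = fun u => c * n (u - t) := funext fun u => hm₂ t u
    rw [this]
    exact continuous_const.mul (hn_cont.comp (continuous_id.sub continuous_const))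
  have hf_cont : ∀ x, Continuous fun u => f u x := by
    intro x
    exact ((hm₁c.add (hm₂c.mul continuous_const)).add (hσ2c.div_const 2)).rexp
  have hf'_cont : ∀ x, Continuous fun u => Real.exp (m₁ t u + m₂ t u * x + σ2 t u / 2) * m₂ t u :=
    fun x => (hf_cont x).mul hm₂c
  have hf_pos : ∀ u x, 0 < f u x := fun u x => Real.exp_pos _
  -- differentiation under the integral
  have hderiv_point : ∀ u x, HasDerivAt (fun y => f u y)
      (Real.exp (m₁ t u + m₂ t u * x + σ2 t u / 2) * m₂ t u) x := by
    intro u x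
    have h1 : HasDerivAt (fun y : ℝ => m₁ t u + m₂ t u * y + σ2 t u / 2) (m₂ t u) x := by
      simpa using (((hasDerivAt_id x).const_mul (m₂ t u)).const_add (m₁ t u)).add_const
        (σ2 t u / 2)
    exact h1.exp
  have key := intervalIntegral.hasDerivAt_integral_of_dominated_loc_of_deriv_le
      (F := fun x u => f u x)
      (F' := fun x u => Real.exp (m₁ t u + m₂ t u * x + σ2 t u / 2) * m₂ t u)
      (μ := volume) (x₀ := r) (a := t) (b := T)
      (bound := fun u => Real.exp (m₁ t u + |m₂ t u| * (|r| + 1) + σ2 t u / 2) * |m₂ t u|)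
      (Metric.ball_mem_nhds r one_pos)
      (Filter.Eventually.of_forall fun x => ((hf_cont x).aestronglyMeasurable).restrict)
      ((hf_cont r).intervalIntegrable t T)
      (((hf'_cont r).aestronglyMeasurable).restrict)
      ?_ ?_ ?_
  · obtain ⟨hint', hder⟩ := key
    set A : ℝ := a ^ (1 / (1 - α)) with hAdef
    set B : ℝ := b ^ (1 / (1 - α)) with hBdef
    have hA0 : 0 ≤ A := Real.rpow_nonneg ha _
    have hB0 : 0 ≤ B := Real.rpow_nonneg hb _
    set I : ℝ := ∫ u in t..T, f u r with hIdef
    set I' : ℝ := ∫ u in t..T, Real.exp (m₁ t u + m₂ t u * r + σ2 t u / 2) * m₂ t u with hI'def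
    have hGder : HasDerivAt (fun x => G t x)
        (A * I' + B * (Real.exp (m₁ t T + m₂ t T * r + σ2 t T / 2) * m₂ t T)) r := by
      have h2 := (hderiv_point T r).const_mul B
      have h3 := (hder.const_mul A).add h2
      refine h3.congr_of_eventuallyEq (Filter.EventuallyEq.of_eq (funext fun x => ?_))
      rw [hG t x]; rfl
    have hfInt : IntervalIntegrable (fun u => f u r) volume t T :=
      (hf_cont r).intervalIntegrable t T
    have hI_pos : 0 < I :=
      intervalIntegral.intervalIntegral_pos_of_pos_on hfInt (fun u _ => hf_pos u r) htT
    have hI'_nonneg : 0 ≤ I' :=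
      intervalIntegral.integral_nonneg htT.le
        (fun u hu => mul_nonneg (Real.exp_pos _).le (hm₂_bound u hu).1)
    have hI'_le : I' ≤ M * I := by
      rw [hI'def, hIdef, ← intervalIntegral.integral_const_mul]
      apply intervalIntegral.integral_mono_on htT.le hint' ((hfInt.const_mul M))
      intro u hu
      calc Real.exp (m₁ t u + m₂ t u * r + σ2 t u / 2) * m₂ t u
          ≤ Real.exp (m₁ t u + m₂ t u * r + σ2 t u / 2) * M :=
            mul_le_mul_of_nonneg_left (hm₂_bound u hu).2 (Real.exp_pos _).le
        _ = M * f u r := mul_comm _ _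
    have hm₂T := hm₂_bound T ⟨htT.le, le_refl T⟩
    have hfT_pos : 0 < Real.exp (m₁ t T + m₂ t T * r + σ2 t T / 2) := Real.exp_pos _
    have hG_eq : G t r = A * I + B * Real.exp (m₁ t T + m₂ t T * r + σ2 t T / 2) := hG t r
    have hGpos : 0 < G t r := by
      rw [hG_eq]
      rcases not_and_or.mp hab with h | h
      · have hA : 0 < A := Real.rpow_pos_of_pos (lt_of_le_of_ne ha (Ne.symm h)) _
        linarith [mul_pos hA hI_pos, mul_nonneg hB0 hfT_pos.le]
      · have hB : 0 < B := Real.rpow_pos_of_pos (lt_of_le_of_ne hb (Ne.symm h)) _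
        linarith [mul_pos hB hfT_pos, mul_nonneg hA0 hI_pos.le]
    rw [hGder.deriv]
    set D : ℝ := A * I' + B * (Real.exp (m₁ t T + m₂ t T * r + σ2 t T / 2) * m₂ t T) with hDdef
    have hD_nonneg : 0 ≤ D :=
      add_nonneg (mul_nonneg hA0 hI'_nonneg)
        (mul_nonneg hB0 (mul_nonneg hfT_pos.le hm₂T.1))
    have hD_le : D ≤ M * G t r := by
      rw [hG_eq, hDdef]
      have h1 : A * I' ≤ A * (M * I) := mul_le_mul_of_nonneg_left hI'_le hA0
      have h2 : Real.exp (m₁ t T + m₂ t T * r + σ2 t T / 2) * m₂ t T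
          ≤ M * Real.exp (m₁ t T + m₂ t T * r + σ2 t T / 2) := by
        rw [mul_comm M]
        exact mul_le_mul_of_nonneg_left hm₂T.2 hfT_pos.le
      have h3 : B * (Real.exp (m₁ t T + m₂ t T * r + σ2 t T / 2) * m₂ t T)
          ≤ B * (M * Real.exp (m₁ t T + m₂ t T * r + σ2 t T / 2)) :=
        mul_le_mul_of_nonneg_left h2 hB0
      calc A * I' + B * (Real.exp (m₁ t T + m₂ t T * r + σ2 t T / 2) * m₂ t T)
          ≤ A * (M * I) + B * (M * Real.exp (m₁ t T + m₂ t T * r + σ2 t T / 2)) :=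
            add_le_add h1 h3
        _ = M * (A * I + B * Real.exp (m₁ t T + m₂ t T * r + σ2 t T / 2)) := by ring
    rw [abs_of_nonneg (div_nonneg hD_nonneg hGpos.le), div_le_iff₀ hGpos]
    linarith
  · -- bound
    apply Filter.Eventually.of_forall
    intro u _ x hx
    have hxr : |x| ≤ |r| + 1 := by
      have h1 : |x - r| < 1 := mem_ball_iff_norm.mp hx
      calc |x| = |x - r + r| := by ring_nf
        _ ≤ |x - r| + |r| := abs_add_le _ _
        _ ≤ |r| + 1 := by linarith
    rw [Real.norm_eq_abs, abs_mul, Real.abs_exp]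
    apply mul_le_mul_of_nonneg_right _ (abs_nonneg _)
    apply Real.exp_le_exp.mpr
    have : m₂ t u * x ≤ |m₂ t u| * (|r| + 1) := by
      calc m₂ t u * x ≤ |m₂ t u * x| := le_abs_self _
        _ = |m₂ t u| * |x| := abs_mul _ _
        _ ≤ |m₂ t u| * (|r| + 1) := mul_le_mul_of_nonneg_left hxr (abs_nonneg _)
    linarith
  · -- bound integrable
    apply Continuous.intervalIntegrable
    exact (((hm₁c.add ((hm₂c.abs).mul continuous_const)).add (hσ2c.div_const 2)).rexp).mul hm₂c.abs
  · -- differentiability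
    apply Filter.Eventually.of_forall
    intro u _ x _
    exact hderiv_point u x
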